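/- arXiv:1707.06444 — 6 statements merged into one kernel-verified Lean document; each statement's English description precedes it below -/
import Mathlib

section
/- For a binomial random variable X ~ Bin(N,p), E[1/(1+X)²] ≤ 2/(Np)². -/
open Finset

lemma choose_shift (N k : ℕ) :
    (N + 1) * (N + 2) * N.choose k = (N + 2).choose (k + 2) * ((k + 1) * (k + 2)) := by
  have h1 := Nat.add_one_mul_choose_eq N k
  have h2 := Nat.add_one_mul_choose_eq (N + 1) (k + 1)
  simp [Nat.succ_eq_add_one, add_assoc] at h1 h2
  calc (N + 1) * (N + 2) * N.choose k = (N + 2) * ((N + 1) * N.choose k) := by ring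
    _ = (N + 2) * ((N + 1).choose (k + 1) * (k + 1)) := by rw [h1]
    _ = ((N + 2) * (N + 1).choose (k + 1)) * (k + 1) := by ring
    _ = ((N + 2).choose (k + 2) * (k + 2)) * (k + 1) := by rw [h2]
    _ = _ := by ring

/-- For a binomial random variable `X ~ Bin(N,p)` with `N ≥ 1`, `p ∈ (0,1]`,
we have `E[1/(1+X)²] ≤ 2/(Np)²`. -/
theorem binomial_inv_sq_moment_le (N : ℕ) (hN : 1 ≤ N) (p : ℝ) (hp0 : 0 < p) (hp1 : p ≤ 1) :
    ∑ k ∈ Finset.range (N + 1),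
        (N.choose k : ℝ) * p ^ k * (1 - p) ^ (N - k) * (1 / (1 + (k : ℝ)) ^ 2)
      ≤ 2 / ((N : ℝ) * p) ^ 2 := by
  set q : ℝ := 1 - p with hq
  have hq0 : 0 ≤ q := by simp [hq]; linarith
  set S : ℝ := ∑ k ∈ Finset.range (N + 1),
      ((N + 2).choose (k + 2) : ℝ) * p ^ k * q ^ (N - k) with hS
  have hSnn : 0 ≤ S := Finset.sum_nonneg fun k _ => by positivity
  -- step 1: per-term bound
  have step1 : ∑ k ∈ Finset.range (N + 1),
      (N.choose k : ℝ) * p ^ k * q ^ (N - k) * (1 / (1 + (k : ℝ)) ^ 2)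
      ≤ ∑ k ∈ Finset.range (N + 1),
        2 / (((N : ℝ) + 1) * ((N : ℝ) + 2)) *
          (((N + 2).choose (k + 2) : ℝ) * p ^ k * q ^ (N - k)) := by
    apply Finset.sum_le_sum
    intro k _
    have hid : ((N : ℝ) + 1) * ((N : ℝ) + 2) * (N.choose k : ℝ)
        = ((N + 2).choose (k + 2) : ℝ) * (((k : ℝ) + 1) * ((k : ℝ) + 2)) := by
      have := choose_shift N k
      exact_mod_cast congrArg (Nat.cast : ℕ → ℝ) this
    have hpq : (0 : ℝ) ≤ p ^ k * q ^ (N - k) := by positivity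
    have hkpos : (0 : ℝ) < 1 + (k : ℝ) := by positivity
    have hd : (0 : ℝ) ≤ ((N + 2).choose (k + 2) : ℝ) := Nat.cast_nonneg _
    have hNpos : (0 : ℝ) < ((N : ℝ) + 1) * ((N : ℝ) + 2) := by positivity
    have hcoef : (N.choose k : ℝ) * (1 / (1 + (k : ℝ)) ^ 2)
        ≤ 2 / (((N : ℝ) + 1) * ((N : ℝ) + 2)) * ((N + 2).choose (k + 2) : ℝ) := by
      rw [mul_one_div, div_le_iff₀ (by positivity), div_mul_eq_mul_div, div_mul_eq_mul_div, le_div_iff₀ hNpos]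
      nlinarith [sq_nonneg ((k : ℝ) + 1), mul_nonneg hd (sq_nonneg ((k : ℝ) + 1))]
    calc (N.choose k : ℝ) * p ^ k * q ^ (N - k) * (1 / (1 + (k : ℝ)) ^ 2)
        = ((N.choose k : ℝ) * (1 / (1 + (k : ℝ)) ^ 2)) * (p ^ k * q ^ (N - k)) := by ring
      _ ≤ (2 / (((N : ℝ) + 1) * ((N : ℝ) + 2)) * ((N + 2).choose (k + 2) : ℝ))
            * (p ^ k * q ^ (N - k)) := mul_le_mul_of_nonneg_right hcoef hpq
      _ = 2 / (((N : ℝ) + 1) * ((N : ℝ) + 2)) *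
            (((N + 2).choose (k + 2) : ℝ) * p ^ k * q ^ (N - k)) := by ring
  -- step 2: p^2 * S ≤ 1
  have step2 : p ^ 2 * S ≤ 1 := by
    have hsum : p ^ 2 * S = ∑ k ∈ Finset.range (N + 1),
        ((N + 2).choose (k + 2) : ℝ) * p ^ (k + 2) * q ^ (N + 2 - (k + 2)) := by
      rw [hS, Finset.mul_sum]
      apply Finset.sum_congr rfl
      intro k hk
      have hk' : k ≤ N := Nat.lt_succ_iff.mp (Finset.mem_range.mp hk)
      have : N + 2 - (k + 2) = N - k := by omega
      rw [this]
      ring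
    have hbin : (∑ j ∈ Finset.range (N + 3),
        p ^ j * q ^ (N + 2 - j) * ((N + 2).choose j : ℝ)) = 1 := by
      have := add_pow p q (N + 2)
      rw [hq] at this ⊢
      have hpq1 : p + (1 - p) = 1 := by ring
      rw [hpq1, one_pow] at this
      exact this.symm
    set g : ℕ → ℝ := fun j => p ^ j * q ^ (N + 2 - j) * ((N + 2).choose j : ℝ) with hg
    have hgnn : ∀ j, 0 ≤ g j := fun j => by positivity
    have hsplit : ∑ j ∈ Finset.range (N + 3), g j
        = (∑ k ∈ Finset.range (N + 1), g (k + 2)) + g 1 + g 0 := by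
      rw [Finset.sum_range_succ' g (N + 2), Finset.sum_range_succ' (fun i => g (i + 1)) (N + 1)]
    have hle : ∑ k ∈ Finset.range (N + 1), g (k + 2) ≤ ∑ j ∈ Finset.range (N + 3), g j := by
      rw [hsplit]
      have := hgnn 0; have := hgnn 1
      linarith
    rw [hsum]
    calc (∑ k ∈ Finset.range (N + 1),
          ((N + 2).choose (k + 2) : ℝ) * p ^ (k + 2) * q ^ (N + 2 - (k + 2)))
        = ∑ k ∈ Finset.range (N + 1), g (k + 2) := by
          apply Finset.sum_congr rfl; intro k _; simp [hg]; ring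
      _ ≤ ∑ j ∈ Finset.range (N + 3), g j := hle
      _ = 1 := hbin
  -- combine
  have hS1 : S ≤ 1 / p ^ 2 := by
    rw [le_div_iff₀ (by positivity)]
    linarith [step2]
  calc ∑ k ∈ Finset.range (N + 1),
        (N.choose k : ℝ) * p ^ k * q ^ (N - k) * (1 / (1 + (k : ℝ)) ^ 2)
      ≤ 2 / (((N : ℝ) + 1) * ((N : ℝ) + 2)) * S := by
        rw [← Finset.mul_sum] at step1; exact step1
    _ ≤ 2 / (((N : ℝ) + 1) * ((N : ℝ) + 2)) * (1 / p ^ 2) :=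
        mul_le_mul_of_nonneg_left hS1 (by positivity)
    _ ≤ 2 / ((N : ℝ) * p) ^ 2 := by
        have hN1 : (1 : ℝ) ≤ (N : ℝ) := by exact_mod_cast hN
        rw [div_mul_eq_mul_div, mul_one_div, div_div, div_le_div_iff₀ (by positivity) (by positivity)]
        have : ((N : ℝ) * p) ^ 2 = (N : ℝ) ^ 2 * p ^ 2 := by ring
        nlinarith [sq_nonneg p, mul_pos hp0 hp0]
end

section
/- Let A be an N×N symmetric nonnegative matrix with all row sums equal to 1-μ for some μ ∈ (0,1). Let Ω ⊂ {1,...,N} with complement Ω′, and define B = A², H = (I - B_{Ω′})^{-1} (which exists since the spectral radius of A is at most 1-μ < 1), and the error matrix E = A_{ΩΩ′} H B_{Ω′Ω}. Then E is entrywise nonnegative and every row sum of E is at most 1-μ. -/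
open Matrix Finset BigOperators

private theorem one_sub_inv_facts {ι : Type*} [Fintype ι] [DecidableEq ι]
    (M : Matrix ι ι ℝ) (ρ : ℝ) (hρ0 : 0 ≤ ρ) (hρ1 : ρ < 1)
    (hMnn : ∀ i j, 0 ≤ M i j) (hMrow : ∀ i, ∑ j, M i j ≤ ρ) :
    (1 - M) * (1 - M)⁻¹ = 1 ∧ (1 - M)⁻¹ * (1 - M) = 1 ∧ ∀ i j, 0 ≤ (1 - M)⁻¹ i j := by
  -- powers are nonnegative
  have hpow_nn : ∀ n (i j : ι), 0 ≤ (M ^ n) i j := by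
    intro n
    induction n with
    | zero =>
      intro i j
      rw [pow_zero, Matrix.one_apply]
      split <;> norm_num
    | succ n ih =>
      intro i j
      rw [pow_succ, Matrix.mul_apply]
      exact Finset.sum_nonneg fun k _ => mul_nonneg (ih i k) (hMnn k j)
  -- row sums of powers
  have hpow_row : ∀ n (i : ι), ∑ j, (M ^ n) i j ≤ ρ ^ n := by
    intro n
    induction n with
    | zero =>
      intro i
      simp [Matrix.one_apply]
    | succ n ih =>
      intro i
      rw [pow_succ']
      calc ∑ j, (M * M ^ n) i j = ∑ j, ∑ k, M i k * (M ^ n) k j := by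
            simp [Matrix.mul_apply]
        _ = ∑ k, M i k * ∑ j, (M ^ n) k j := by
            rw [Finset.sum_comm]; simp [Finset.mul_sum]
        _ ≤ ∑ k, M i k * ρ ^ n := by
            refine Finset.sum_le_sum fun k _ => ?_
            exact mul_le_mul_of_nonneg_left (ih k) (hMnn i k)
        _ = (∑ k, M i k) * ρ ^ n := by rw [Finset.sum_mul]
        _ ≤ ρ * ρ ^ n := by
            exact mul_le_mul_of_nonneg_right (hMrow i) (pow_nonneg hρ0 n)
        _ = ρ ^ (n + 1) := by rw [pow_succ']
  -- entries of powers are at most ρ^n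
  have hpow_entry : ∀ n (i j : ι), (M ^ n) i j ≤ ρ ^ n := by
    intro n i j
    calc (M ^ n) i j ≤ ∑ j', (M ^ n) i j' :=
          Finset.single_le_sum (fun j' _ => hpow_nn n i j') (Finset.mem_univ j)
      _ ≤ ρ ^ n := hpow_row n i
  -- determinant nonzero
  have hdet : (1 - M).det ≠ 0 := by
    intro h
    obtain ⟨v, hv0, hv⟩ := Matrix.exists_mulVec_eq_zero_iff.mpr h
    obtain ⟨i, hi⟩ := Function.ne_iff.mp hv0
    have hvM : ∀ i, v i = ∑ j, M i j * v j := by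
      intro i
      have h' := congrFun hv i
      simp only [Matrix.mulVec, dotProduct, Matrix.sub_apply, Matrix.one_apply,
        Pi.zero_apply, sub_mul, Finset.sum_sub_distrib, ite_mul, one_mul, zero_mul,
        Finset.sum_ite_eq, Finset.mem_univ, if_true] at h'
      linarith
    obtain ⟨i₀, -, hmax⟩ := Finset.exists_max_image Finset.univ (fun i => |v i|)
      ⟨i, Finset.mem_univ i⟩
    have hb : |v i₀| ≤ ρ * |v i₀| := by
      calc |v i₀| = |∑ j, M i₀ j * v j| := by rw [← hvM]
        _ ≤ ∑ j, |M i₀ j * v j| := Finset.abs_sum_le_sum_abs _ _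
        _ = ∑ j, M i₀ j * |v j| := by
            refine Finset.sum_congr rfl fun j _ => ?_
            rw [abs_mul, abs_of_nonneg (hMnn i₀ j)]
        _ ≤ ∑ j, M i₀ j * |v i₀| := by
            refine Finset.sum_le_sum fun j _ => ?_
            exact mul_le_mul_of_nonneg_left (hmax j (Finset.mem_univ j)) (hMnn i₀ j)
        _ = (∑ j, M i₀ j) * |v i₀| := by rw [Finset.sum_mul]
        _ ≤ ρ * |v i₀| := mul_le_mul_of_nonneg_right (hMrow i₀) (abs_nonneg _)
    have h0 : |v i₀| ≤ 0 := by nlinarith [abs_nonneg (v i₀)]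
    exact hi (abs_eq_zero.mp (le_antisymm
      (le_trans (hmax i (Finset.mem_univ i)) h0) (abs_nonneg _)))
  have hu : IsUnit (1 - M).det := isUnit_iff_ne_zero.mpr hdet
  have h1 : (1 - M) * (1 - M)⁻¹ = 1 := Matrix.mul_nonsing_inv _ hu
  have h2 : (1 - M)⁻¹ * (1 - M) = 1 := Matrix.nonsing_inv_mul _ hu
  set H := (1 - M)⁻¹ with hH
  -- geometric identity
  have hgeom : ∀ n, (∑ k ∈ Finset.range n, M ^ k) = H - M ^ n * H := by
    intro n
    have hg : (∑ k ∈ Finset.range n, M ^ k) * (1 - M) = 1 - M ^ n := by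
      have hgs := geom_sum_mul M n
      calc (∑ k ∈ Finset.range n, M ^ k) * (1 - M)
          = -((∑ k ∈ Finset.range n, M ^ k) * (M - 1)) := by noncomm_ring
        _ = -(M ^ n - 1) := by rw [hgs]
        _ = 1 - M ^ n := by noncomm_ring
    calc (∑ k ∈ Finset.range n, M ^ k)
        = (∑ k ∈ Finset.range n, M ^ k) * ((1 - M) * H) := by rw [h1, mul_one]
      _ = ((∑ k ∈ Finset.range n, M ^ k) * (1 - M)) * H := by rw [mul_assoc]
      _ = (1 - M ^ n) * H := by rw [hg]
      _ = H - M ^ n * H := by rw [sub_mul, one_mul]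
  refine ⟨h1, h2, ?_⟩
  intro i j
  set c : ℝ := ∑ l, |H l j| with hc
  have hcnn : 0 ≤ c := Finset.sum_nonneg fun l _ => abs_nonneg _
  have key : ∀ n : ℕ, -(c * ρ ^ n) ≤ H i j := by
    intro n
    have hm : (∑ k ∈ Finset.range n, M ^ k) + M ^ n * H = H := by
      rw [hgeom n]; abel
    have hid : H i j = (∑ k ∈ Finset.range n, (M ^ k) i j) + (M ^ n * H) i j := by
      conv_lhs => rw [← hm]
      rw [Matrix.add_apply, Matrix.sum_apply]
    have ht1 : 0 ≤ ∑ k ∈ Finset.range n, (M ^ k) i j :=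
      Finset.sum_nonneg fun k _ => hpow_nn k i j
    have ht2 : -(ρ ^ n * c) ≤ (M ^ n * H) i j := by
      rw [Matrix.mul_apply, hc, Finset.mul_sum, ← Finset.sum_neg_distrib]
      refine Finset.sum_le_sum fun l _ => ?_
      have h1' : -(ρ ^ n * |H l j|) ≤ -((M ^ n) i l * |H l j|) := by
        exact neg_le_neg (mul_le_mul_of_nonneg_right (hpow_entry n i l) (abs_nonneg _))
      have h2' : -((M ^ n) i l * |H l j|) ≤ (M ^ n) i l * H l j := by
        rw [← mul_neg]
        exact mul_le_mul_of_nonneg_left (neg_abs_le _) (hpow_nn n i l)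
      linarith
    have : -(ρ ^ n * c) ≤ H i j := by rw [hid]; linarith
    linarith [this, mul_comm c (ρ ^ n)]
  have hlim : Filter.Tendsto (fun n : ℕ => -(c * ρ ^ n)) Filter.atTop (nhds 0) := by
    have h' := (tendsto_pow_atTop_nhds_zero_of_lt_one hρ0 hρ1).const_mul c
    simpa using h'.neg
  exact le_of_tendsto' hlim key

/-- Let `A` be symmetric, entrywise nonnegative, with all row sums `1-μ`, `μ ∈ (0,1)`.
With `B = A²`, `H = (I - B_{Ω'Ω'})⁻¹` and `E = A_{ΩΩ'} H B_{Ω'Ω}`, the error matrix `E`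
is entrywise nonnegative and all its row sums are at most `1-μ`. -/
theorem error_matrix_nonneg_row_sums_le
    {N : ℕ} (μ : ℝ) (hμ0 : 0 < μ) (hμ1 : μ < 1)
    (A : Matrix (Fin N) (Fin N) ℝ) (hsymm : A.IsSymm)
    (hnonneg : ∀ i j, 0 ≤ A i j) (hrow : ∀ i, ∑ j, A i j = 1 - μ)
    (S : Finset (Fin N))
    (E : Matrix {i // i ∈ S} {i // i ∈ S} ℝ)
    (hE : E =
       A.submatrix (fun i : {i // i ∈ S} => (i : Fin N)) (fun j : {j // j ∈ Sᶜ} => (j : Fin N))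
       * (1 - (A * A).submatrix (fun i : {i // i ∈ Sᶜ} => (i : Fin N))
              (fun j : {j // j ∈ Sᶜ} => (j : Fin N)))⁻¹
       * (A * A).submatrix (fun i : {i // i ∈ Sᶜ} => (i : Fin N))
              (fun j : {j // j ∈ S} => (j : Fin N))) :
    (∀ i j, 0 ≤ E i j) ∧ ∀ i, ∑ j, E i j ≤ 1 - μ := by
  have hμ' : 0 < 1 - μ := by linarith
  -- nonnegativity of entries of A*A
  have hBnn : ∀ i j, 0 ≤ (A * A) i j := by
    intro i j
    rw [Matrix.mul_apply]
    exact Finset.sum_nonneg fun k _ => mul_nonneg (hnonneg i k) (hnonneg k j)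
  -- row sums of A*A
  have hBrow : ∀ i, ∑ j, (A * A) i j = (1 - μ) ^ 2 := by
    intro i
    calc ∑ j, (A * A) i j = ∑ j, ∑ k, A i k * A k j := by simp [Matrix.mul_apply]
      _ = ∑ k, A i k * ∑ j, A k j := by rw [Finset.sum_comm]; simp [Finset.mul_sum]
      _ = ∑ k, A i k * (1 - μ) := by simp_rw [hrow]
      _ = (1 - μ) * (1 - μ) := by rw [← Finset.sum_mul, hrow, mul_comm]
      _ = (1 - μ) ^ 2 := by ring
  set M : Matrix {j // j ∈ Sᶜ} {j // j ∈ Sᶜ} ℝ :=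
    (A * A).submatrix (fun i : {i // i ∈ Sᶜ} => (i : Fin N))
      (fun j : {j // j ∈ Sᶜ} => (j : Fin N)) with hM
  have hρ0 : (0:ℝ) ≤ (1 - μ) ^ 2 := sq_nonneg _
  have hρ1 : (1 - μ) ^ 2 < 1 := by nlinarith
  have hMnn : ∀ i j, 0 ≤ M i j := fun i j => hBnn _ _
  -- sums over the subtype
  have hsub : ∀ (l : Fin N), ∑ j : {j // j ∈ Sᶜ}, (A * A) l (j : Fin N)
      = ∑ j ∈ Sᶜ, (A * A) l j := by
    intro l
    exact (Finset.sum_subtype Sᶜ (fun x => Iff.rfl) (fun j => (A * A) l j)).symm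
  have hsubS : ∀ (l : Fin N), ∑ j : {j // j ∈ S}, (A * A) l (j : Fin N)
      = ∑ j ∈ S, (A * A) l j := by
    intro l
    exact (Finset.sum_subtype S (fun x => Iff.rfl) (fun j => (A * A) l j)).symm
  have hsplit : ∀ (l : Fin N),
      (∑ j ∈ S, (A * A) l j) + ∑ j ∈ Sᶜ, (A * A) l j = (1 - μ) ^ 2 := by
    intro l
    rw [Finset.sum_add_sum_compl, hBrow]
  have hMrow : ∀ i : {j // j ∈ Sᶜ}, ∑ j, M i j ≤ (1 - μ) ^ 2 := by
    intro i
    rw [hM]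
    show ∑ j : {j // j ∈ Sᶜ}, (A * A) (i : Fin N) (j : Fin N) ≤ (1 - μ) ^ 2
    rw [hsub]
    have := hsplit (i : Fin N)
    have hS : 0 ≤ ∑ j ∈ S, (A * A) (i : Fin N) j :=
      Finset.sum_nonneg fun j _ => hBnn _ _
    linarith
  obtain ⟨h1, h2, hHnn⟩ := one_sub_inv_facts M ((1 - μ) ^ 2) hρ0 hρ1 hMnn hMrow
  set H := (1 - M)⁻¹ with hHdef
  set A' : Matrix {i // i ∈ S} {j // j ∈ Sᶜ} ℝ :=
    A.submatrix (fun i : {i // i ∈ S} => (i : Fin N))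
      (fun j : {j // j ∈ Sᶜ} => (j : Fin N)) with hA'
  set Bc : Matrix {j // j ∈ Sᶜ} {i // i ∈ S} ℝ :=
    (A * A).submatrix (fun i : {i // i ∈ Sᶜ} => (i : Fin N))
      (fun j : {j // j ∈ S} => (j : Fin N)) with hBc
  have hE' : E = A' * H * Bc := hE
  have hA'nn : ∀ i j, 0 ≤ A' i j := fun i j => hnonneg _ _
  have hBcnn : ∀ i j, 0 ≤ Bc i j := fun i j => hBnn _ _
  constructor
  · intro i j
    rw [hE', Matrix.mul_apply]
    refine Finset.sum_nonneg fun l _ => mul_nonneg ?_ (hBcnn l j)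
    rw [Matrix.mul_apply]
    exact Finset.sum_nonneg fun k _ => mul_nonneg (hA'nn i k) (hHnn k l)
  · intro i
    -- H * M = H - 1
    have hHM : H * M = H - 1 := by
      have : H * (1 - M) = 1 := h2
      rw [mul_sub, mul_one] at this
      linear_combination (norm := noncomm_ring) -this
    -- row sums of H are nonnegative
    set s : {j // j ∈ Sᶜ} → ℝ := fun k => ∑ l, H k l with hs
    have hsnn : ∀ k, 0 ≤ s k := fun k => Finset.sum_nonneg fun l _ => hHnn k l
    -- v l = sum over S of B, the "column-block" row sums
    set v : {j // j ∈ Sᶜ} → ℝ := fun l => ∑ j : {i // i ∈ S}, Bc l j with hv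
    have hvval : ∀ l, v l = (1 - μ) ^ 2 - ∑ l', M l l' := by
      intro l
      have h1' : v l = ∑ j ∈ S, (A * A) (l : Fin N) j := by
        rw [hv]; exact hsubS (l : Fin N)
      have h2' : ∑ l' : {j // j ∈ Sᶜ}, M l l' = ∑ j ∈ Sᶜ, (A * A) (l : Fin N) j :=
        hsub (l : Fin N)
      have := hsplit (l : Fin N)
      rw [h1', h2']
      linarith
    -- key bound on w k = ∑_l H k l * v l
    have hw : ∀ k, ∑ l, H k l * v l ≤ 1 := by
      intro k
      have hsum1 : ∑ l', (1 : Matrix {j // j ∈ Sᶜ} {j // j ∈ Sᶜ} ℝ) k l' = 1 := by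
        simp [Matrix.one_apply]
      have hHMsum : ∑ l, H k l * ∑ l', M l l' = s k - 1 := by
        calc ∑ l, H k l * ∑ l', M l l' = ∑ l, ∑ l', H k l * M l l' := by
              simp [Finset.mul_sum]
          _ = ∑ l', ∑ l, H k l * M l l' := Finset.sum_comm
          _ = ∑ l', (H * M) k l' := by simp [Matrix.mul_apply]
          _ = ∑ l', (H - 1) k l' := by rw [hHM]
          _ = ∑ l', (H k l' - (1 : Matrix _ _ ℝ) k l') := by simp [Matrix.sub_apply]
          _ = s k - 1 := by rw [Finset.sum_sub_distrib, hsum1, hs]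
      have hcalc : ∑ l, H k l * v l = (1 - μ) ^ 2 * s k - (s k - 1) := by
        calc ∑ l, H k l * v l
            = ∑ l, (H k l * (1 - μ) ^ 2 - H k l * ∑ l', M l l') := by
              refine Finset.sum_congr rfl fun l _ => ?_
              rw [hvval l]; ring
          _ = (∑ l, H k l * (1 - μ) ^ 2) - ∑ l, H k l * ∑ l', M l l' :=
              Finset.sum_sub_distrib _ _
          _ = (1 - μ) ^ 2 * s k - (s k - 1) := by
              rw [hHMsum, ← Finset.sum_mul, hs, mul_comm]
      rw [hcalc]
      nlinarith [hsnn k]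
    -- assemble
    have hrowE : ∑ j, E i j = ∑ k, A' i k * ∑ l, H k l * v l := by
      calc ∑ j, E i j = ∑ j, ∑ l, (A' * H) i l * Bc l j := by
            simp [hE', Matrix.mul_apply]
        _ = ∑ l, (A' * H) i l * v l := by
            rw [Finset.sum_comm]; simp [hv, Finset.mul_sum]
        _ = ∑ l, (∑ k, A' i k * H k l) * v l := by simp [Matrix.mul_apply]
        _ = ∑ l, ∑ k, A' i k * (H k l * v l) := by
            refine Finset.sum_congr rfl fun l _ => ?_
            rw [Finset.sum_mul]
            exact Finset.sum_congr rfl fun k _ => by ring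
        _ = ∑ k, A' i k * ∑ l, H k l * v l := by
            rw [Finset.sum_comm]; simp [Finset.mul_sum]
    rw [hrowE]
    calc ∑ k, A' i k * ∑ l, H k l * v l ≤ ∑ k, A' i k * 1 := by
          refine Finset.sum_le_sum fun k _ => ?_
          exact mul_le_mul_of_nonneg_left (hw k) (hA'nn i k)
      _ = ∑ k ∈ Sᶜ, A (i : Fin N) k := by
          simp only [mul_one, hA', Matrix.submatrix_apply]
          exact (Finset.sum_subtype Sᶜ (fun x => Iff.rfl) (fun j => A (i : Fin N) j)).symm
      _ ≤ ∑ k, A (i : Fin N) k := by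
          refine Finset.sum_le_sum_of_subset_of_nonneg (Finset.subset_univ _) ?_
          intro k _ _; exact hnonneg _ _
      _ = 1 - μ := hrow _
end

section
/- Let A be an N×N symmetric nonnegative matrix with row sums 1-μ, μ ∈ (0,1), B = A², Ω′ the complement of Ω ⊂ {1,...,N}, H = (I - B_{Ω′})^{-1}, and F = H B_{Ω′Ω}. Then every row sum of F is at most 1, and in fact equals 1 - μ(2-μ)·(row sum of H). -/
open Matrix Finset BigOperators

/-- With `A` symmetric nonnegative, row sums `1-μ`, `B = A²`, `H = (I - B_{Ω'Ω'})⁻¹`,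
`F = H B_{Ω'Ω}`: every row sum of `F` equals `1 - μ(2-μ)·(row sum of H)` and is at most `1`. -/
theorem F_row_sums
    {N : ℕ} (μ : ℝ) (hμ0 : 0 < μ) (hμ1 : μ < 1)
    (A : Matrix (Fin N) (Fin N) ℝ) (hsymm : A.IsSymm)
    (hnonneg : ∀ i j, 0 ≤ A i j) (hrow : ∀ i, ∑ j, A i j = 1 - μ)
    (S : Finset (Fin N))
    (H : Matrix {i // i ∈ Sᶜ} {i // i ∈ Sᶜ} ℝ)
    (hH : H = (1 - (A * A).submatrix (fun i : {i // i ∈ Sᶜ} => (i : Fin N))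
              (fun j : {j // j ∈ Sᶜ} => (j : Fin N)))⁻¹)
    (F : Matrix {i // i ∈ Sᶜ} {i // i ∈ S} ℝ)
    (hF : F = H * (A * A).submatrix (fun i : {i // i ∈ Sᶜ} => (i : Fin N))
              (fun j : {j // j ∈ S} => (j : Fin N))) :
    ∀ ℓ, (∑ j, F ℓ j = 1 - μ * (2 - μ) * ∑ m, H ℓ m) ∧ (∑ j, F ℓ j ≤ 1) := by
  intro ℓ
  have hne : Nonempty {i // i ∈ Sᶜ} := ⟨ℓ⟩
  set B : Matrix (Fin N) (Fin N) ℝ := A * A with hBdef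
  -- entrywise nonnegativity of B
  have hBnn : ∀ i j, 0 ≤ B i j := by
    intro i j
    rw [hBdef, Matrix.mul_apply]
    exact Finset.sum_nonneg fun k _ => mul_nonneg (hnonneg i k) (hnonneg k j)
  -- row sums of B
  have hBrow : ∀ i, ∑ j, B i j = (1 - μ) * (1 - μ) := by
    intro i
    calc ∑ j, B i j = ∑ j, ∑ k, A i k * A k j := by
          simp [hBdef, Matrix.mul_apply]
      _ = ∑ k, ∑ j, A i k * A k j := Finset.sum_comm
      _ = ∑ k, A i k * (1 - μ) := by
          refine Finset.sum_congr rfl fun k _ => ?_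
          rw [← Finset.mul_sum, hrow]
      _ = (1 - μ) * (1 - μ) := by rw [← Finset.sum_mul, hrow]
  set B' : Matrix {i // i ∈ Sᶜ} {i // i ∈ Sᶜ} ℝ :=
    B.submatrix (fun i : {i // i ∈ Sᶜ} => (i : Fin N))
      (fun j : {j // j ∈ Sᶜ} => (j : Fin N)) with hB'def
  have hB'nn : ∀ i j, 0 ≤ B' i j := fun i j => hBnn _ _
  -- row sums of B' are nonneg and at most (1-μ)²
  have hsub : ∀ i : Fin N, ∑ j : {j // j ∈ Sᶜ}, B i (j : Fin N) = ∑ j ∈ Sᶜ, B i j := by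
    intro i; exact Finset.sum_coe_sort Sᶜ (fun j => B i j)
  have hB'row_le : ∀ m : {i // i ∈ Sᶜ}, ∑ j, B' m j ≤ (1 - μ) * (1 - μ) := by
    intro m
    have h1 : ∑ j, B' m j = ∑ j ∈ Sᶜ, B (m : Fin N) j := hsub (m : Fin N)
    rw [h1, ← hBrow (m : Fin N)]
    exact Finset.sum_le_sum_of_subset_of_nonneg (Finset.subset_univ _)
      (fun j _ _ => hBnn _ _)
  have hB'row_nn : ∀ m : {i // i ∈ Sᶜ}, 0 ≤ ∑ j, B' m j := fun m =>
    Finset.sum_nonneg fun j _ => hB'nn m j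
  have hμsq : (1 - μ) * (1 - μ) < 1 := by nlinarith
  -- (1 - B') is invertible
  have hunit : IsUnit (1 - B') := by
    rw [← Matrix.mulVec_injective_iff_isUnit]
    intro u w huw
    have hker : ∀ v : {i // i ∈ Sᶜ} → ℝ, (1 - B').mulVec v = 0 → v = 0 := by
      intro v hv
      have hv' : ∀ i, v i = ∑ m, B' i m * v m := by
        intro i
        have := congrFun hv i
        simp only [Matrix.mulVec, dotProduct, Matrix.sub_apply, Matrix.one_apply,
          sub_mul, Finset.sum_sub_distrib, ite_mul, one_mul, zero_mul,
          Finset.sum_ite_eq, Finset.mem_univ, if_true, Pi.zero_apply] at this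
        linarith [this]
      obtain ⟨i0, hi0⟩ := Finite.exists_max (fun m => |v m|)
      have hle : |v i0| ≤ ((1 - μ) * (1 - μ)) * |v i0| := by
        calc |v i0| = |∑ m, B' i0 m * v m| := by rw [← hv' i0]
          _ ≤ ∑ m, |B' i0 m * v m| := Finset.abs_sum_le_sum_abs _ _
          _ = ∑ m, B' i0 m * |v m| := by
              refine Finset.sum_congr rfl fun m _ => ?_
              rw [abs_mul, abs_of_nonneg (hB'nn i0 m)]
          _ ≤ ∑ m, B' i0 m * |v i0| := by
              refine Finset.sum_le_sum fun m _ => ?_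
              exact mul_le_mul_of_nonneg_left (hi0 m) (hB'nn i0 m)
          _ = (∑ m, B' i0 m) * |v i0| := by rw [Finset.sum_mul]
          _ ≤ ((1 - μ) * (1 - μ)) * |v i0| := by
              exact mul_le_mul_of_nonneg_right (hB'row_le i0) (abs_nonneg _)
      have h0 : |v i0| = 0 := by nlinarith [abs_nonneg (v i0)]
      funext m
      have hm := hi0 m
      rw [h0] at hm
      exact abs_nonpos_iff.mp hm
    have h0 : (1 - B').mulVec (u - w) = 0 := by
      rw [Matrix.mulVec_sub, huw, sub_self]
    have := hker _ h0
    exact sub_eq_zero.mp this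
  have hdet : IsUnit (1 - B').det := (Matrix.isUnit_iff_isUnit_det _).mp hunit
  have hHl : H * (1 - B') = 1 := by rw [hH]; exact Matrix.nonsing_inv_mul _ hdet
  have hHr : (1 - B') * H = 1 := by rw [hH]; exact Matrix.mul_nonsing_inv _ hdet
  -- row sums of H
  set x : {i // i ∈ Sᶜ} → ℝ := fun i => ∑ m, H i m with hxdef
  have hxrel : ∀ i, x i = 1 + ∑ m, B' i m * x m := by
    intro i
    have h := congrArg (fun M : Matrix {i // i ∈ Sᶜ} {i // i ∈ Sᶜ} ℝ => ∑ k, M i k) hHr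
    simp only [Matrix.mul_apply] at h
    rw [Finset.sum_comm] at h
    have hL : ∑ m, (1 - B') i m * x m = x i - ∑ m, B' i m * x m := by
      simp only [Matrix.sub_apply, Matrix.one_apply, sub_mul, Finset.sum_sub_distrib,
        ite_mul, one_mul, zero_mul, Finset.sum_ite_eq, Finset.mem_univ, if_true]
    have hR : ∑ k, (1 : Matrix {i // i ∈ Sᶜ} {i // i ∈ Sᶜ} ℝ) i k = 1 := by
      simp [Matrix.one_apply]
    have h' : ∑ m, (1 - B') i m * x m = 1 := by
      rw [← hR, ← h]
      refine Finset.sum_congr rfl fun m _ => ?_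
      rw [Finset.mul_sum]
    rw [hL] at h'
    linarith
  have hxnn : ∀ i, 0 ≤ x i := by
    obtain ⟨i0, hi0⟩ := Finite.exists_min x
    have hrel := hxrel i0
    have hge : ∑ m, B' i0 m * x m ≥ (∑ m, B' i0 m) * x i0 := by
      rw [Finset.sum_mul]
      exact Finset.sum_le_sum fun m _ => mul_le_mul_of_nonneg_left (hi0 m) (hB'nn i0 m)
    have hs0 := hB'row_nn i0
    have hs1 := hB'row_le i0
    have h0 : 0 ≤ x i0 := by nlinarith [hrel, hge]
    exact fun i => le_trans h0 (hi0 i)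
  -- row sums of H * B'
  have hHB' : H * B' = H - 1 := by
    have h : H - H * B' = 1 := by
      have h2 := hHl
      rw [Matrix.mul_sub, Matrix.mul_one] at h2
      exact h2
    rw [← h]
    abel
  have hHB'row : ∑ m, H ℓ m * (∑ j, B' m j) = x ℓ - 1 := by
    calc ∑ m, H ℓ m * (∑ j, B' m j) = ∑ m, ∑ j, H ℓ m * B' m j := by
          refine Finset.sum_congr rfl fun m _ => ?_; rw [Finset.mul_sum]
      _ = ∑ j, ∑ m, H ℓ m * B' m j := Finset.sum_comm
      _ = ∑ j, (H * B') ℓ j := by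
          refine Finset.sum_congr rfl fun j _ => ?_; rw [Matrix.mul_apply]
      _ = ∑ j, (H ℓ j - (1 : Matrix {i // i ∈ Sᶜ} {i // i ∈ Sᶜ} ℝ) ℓ j) := by
          rw [hHB']; rfl
      _ = x ℓ - 1 := by
          rw [Finset.sum_sub_distrib]
          simp [Matrix.one_apply, hxdef]
  -- the main computation
  have hFrow : ∑ j, F ℓ j = 1 - μ * (2 - μ) * x ℓ := by
    have hsplit : ∀ m : Fin N, ∑ j : {j // j ∈ S}, B m (j : Fin N)
        = (1 - μ) * (1 - μ) - ∑ j ∈ Sᶜ, B m j := by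
      intro m
      have h1 : ∑ j : {j // j ∈ S}, B m (j : Fin N) = ∑ j ∈ S, B m j :=
        Finset.sum_coe_sort S (fun j => B m j)
      have h2 : ∑ j ∈ S, B m j + ∑ j ∈ Sᶜ, B m j = ∑ j, B m j :=
        Finset.sum_add_sum_compl S (fun j => B m j)
      rw [h1]; rw [hBrow m] at h2; linarith
    calc ∑ j, F ℓ j = ∑ j : {j // j ∈ S}, ∑ m, H ℓ m * B (m : Fin N) (j : Fin N) := by
          rw [hF]
          refine Finset.sum_congr rfl fun j _ => ?_
          rw [Matrix.mul_apply]; rfl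
      _ = ∑ m, ∑ j : {j // j ∈ S}, H ℓ m * B (m : Fin N) (j : Fin N) := Finset.sum_comm
      _ = ∑ m, H ℓ m * ((1 - μ) * (1 - μ) - ∑ j ∈ Sᶜ, B (m : Fin N) j) := by
          refine Finset.sum_congr rfl fun m _ => ?_
          rw [← Finset.mul_sum, hsplit (m : Fin N)]
      _ = ∑ m, H ℓ m * ((1 - μ) * (1 - μ)) - ∑ m, H ℓ m * (∑ j, B' m j) := by
          rw [← Finset.sum_sub_distrib]
          refine Finset.sum_congr rfl fun m _ => ?_
          rw [← hsub (m : Fin N)]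
          simp only [hB'def, Matrix.submatrix_apply]
          ring
      _ = ((1 - μ) * (1 - μ)) * x ℓ - (x ℓ - 1) := by
          rw [hHB'row, ← Finset.sum_mul, mul_comm]
      _ = 1 - μ * (2 - μ) * x ℓ := by ring
  refine ⟨hFrow, ?_⟩
  rw [hFrow]
  nlinarith [hxnn ℓ, hμ0, hμ1]
end

section
/- Let A be an N×N symmetric matrix with spectral radius less than 1, Z = I - A², Ω ⊂ {1,...,N} with complement Ω′, R_0 = μ² Z^{-1}, R_1 = A R_0. Then the 'rough estimate' Â = [R_1]_Ω ([R_0]_Ω)^{-1} satisfies Â = A_Ω + A_{ΩΩ′}(I - [A²]_{Ω′})^{-1}[A²]_{Ω′Ω}. -/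
open Matrix Finset BigOperators

private lemma posDef_conj_unitary {n : Type*} [Fintype n] [DecidableEq n]
    {M B : Matrix n n ℝ} (hM : M.PosDef) (hB : IsUnit B) : (B * M * Bᴴ).PosDef := by
  refine Matrix.PosDef.of_dotProduct_mulVec_pos (isHermitian_mul_mul_conjTranspose B hM.1) fun x hx => ?_
  have hBH : IsUnit Bᴴ := by
    rw [Matrix.isUnit_iff_isUnit_det] at hB ⊢
    rwa [Matrix.det_conjTranspose, star_trivial]
  have hinj : Function.Injective (Bᴴ).mulVec := Matrix.mulVec_injective_iff_isUnit.mpr hBH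
  have hBx : Bᴴ *ᵥ x ≠ 0 := (hinj.ne_iff' (Matrix.mulVec_zero Bᴴ)).2 hx
  have := hM.dotProduct_mulVec_pos hBx
  simpa only [star_mulVec, dotProduct_mulVec, vecMul_vecMul,
    conjTranspose_conjTranspose] using this

private lemma posDef_one_sub_sq {N : ℕ} (A : Matrix (Fin N) (Fin N) ℝ) (hsymm : A.IsSymm)
    (hspec : ∀ z ∈ spectrum ℝ A, |z| < 1) : (1 - A * A).PosDef := by
  classical
  have hA : A.IsHermitian := by
    rw [Matrix.IsHermitian, conjTranspose]
    exact hsymm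
  set V : Matrix (Fin N) (Fin N) ℝ := (hA.eigenvectorUnitary : Matrix (Fin N) (Fin N) ℝ) with hV
  have hUU : V * star V = 1 := Matrix.mem_unitaryGroup_iff.mp hA.eigenvectorUnitary.2
  have hUU' : star V * V = 1 := Matrix.mem_unitaryGroup_iff'.mp hA.eigenvectorUnitary.2
  have hVu : IsUnit V := ⟨⟨V, star V, hUU, hUU'⟩, rfl⟩
  set D : Matrix (Fin N) (Fin N) ℝ := diagonal (RCLike.ofReal ∘ hA.eigenvalues) with hD
  have hAV : A = V * D * star V := hA.spectral_theorem
  have hdecomp : 1 - A * A = V * (diagonal fun i => 1 - hA.eigenvalues i ^ 2) * Vᴴ := by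
    have h2 : A * A = V * (D * D) * star V := by
      rw [hAV]
      have hmid : star V * (V * (D * star V)) = D * star V := by
        rw [← Matrix.mul_assoc, hUU', Matrix.one_mul]
      simp only [Matrix.mul_assoc, hmid]
    have h1 : (1 : Matrix (Fin N) (Fin N) ℝ) = V * 1 * star V := by
      rw [Matrix.mul_one, hUU]
    rw [h2]
    nth_rewrite 1 [h1]
    rw [← Matrix.star_eq_conjTranspose, ← Matrix.sub_mul, ← Matrix.mul_sub]
    congr 1
    rw [hD, diagonal_mul_diagonal, ← diagonal_one, diagonal_sub]
    congr 1
    ext i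
    simp [pow_two]
  rw [hdecomp]
  refine posDef_conj_unitary ?_ hVu
  refine Matrix.PosDef.diagonal fun i => ?_
  have h := abs_lt.mp (hspec _ (hA.eigenvalues_mem_spectrum_real i))
  nlinarith [h.1, h.2]

private lemma posDef_submatrix_finset {N : ℕ} {M : Matrix (Fin N) (Fin N) ℝ}
    (hM : M.PosDef) (S : Finset (Fin N)) :
    (M.submatrix (fun a : {i // i ∈ S} => (a : Fin N))
      (fun a : {i // i ∈ S} => (a : Fin N))).PosDef := by
  classical
  rw [Matrix.posDef_iff_dotProduct_mulVec]
  constructor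
  · have h := hM.1
    rw [Matrix.IsHermitian] at h ⊢
    rw [Matrix.conjTranspose_submatrix, h]
  · intro x hx
    set y : Fin N → ℝ := fun j => if h : j ∈ S then x ⟨j, h⟩ else 0 with hy
    have hyS : ∀ (j : {i // i ∈ S}), y (j : Fin N) = x j := by
      intro j; simp [hy, j.2]
    have hsum : ∀ f : Fin N → ℝ, ∑ j, y j * f j = ∑ j : {i // i ∈ S}, x j * f (j : Fin N) := by
      intro f
      simp only [← hyS]
      rw [Finset.sum_coe_sort S (fun k => y k * f k)]
      exact (Finset.sum_subset (Finset.subset_univ S) (fun j _ hj => by simp [hy, hj])).symm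
    have hxy : y ≠ 0 := by
      obtain ⟨i, hi⟩ := Function.ne_iff.mp hx
      exact Function.ne_iff.mpr ⟨(i : Fin N), by simpa [hyS i] using hi⟩
    have inner : ∀ i : Fin N, (M *ᵥ y) i = ∑ k : {i // i ∈ S}, x k * M i (k : Fin N) := by
      intro i
      calc (M *ᵥ y) i = ∑ k, y k * M i k := by
            simp [mulVec, dotProduct, mul_comm]
        _ = _ := hsum _
    have key : star x ⬝ᵥ ((M.submatrix (fun a : {i // i ∈ S} => (a : Fin N))
        (fun a : {i // i ∈ S} => (a : Fin N))) *ᵥ x) = star y ⬝ᵥ (M *ᵥ y) := by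
      calc star x ⬝ᵥ ((M.submatrix (fun a : {i // i ∈ S} => (a : Fin N))
          (fun a : {i // i ∈ S} => (a : Fin N))) *ᵥ x)
          = ∑ i : {i // i ∈ S}, x i * ∑ k : {i // i ∈ S}, M (i : Fin N) (k : Fin N) * x k := by
            simp [dotProduct, mulVec, submatrix_apply]
        _ = ∑ i : {i // i ∈ S}, x i * (M *ᵥ y) (i : Fin N) := by
            refine Finset.sum_congr rfl fun i _ => ?_
            rw [inner]
            congr 1
            exact Finset.sum_congr rfl fun k _ => mul_comm _ _
        _ = ∑ i, y i * (M *ᵥ y) i := (hsum _).symm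
        _ = star y ⬝ᵥ (M *ᵥ y) := by simp [dotProduct]
    rw [key]
    exact hM.dotProduct_mulVec_pos hxy

private lemma submatrix_mul_split {N : ℕ} (S : Finset (Fin N))
    (M P : Matrix (Fin N) (Fin N) ℝ) {α β : Type*} [Fintype α] [Fintype β]
    (f : α → Fin N) (g : β → Fin N) :
    (M * P).submatrix f g
      = M.submatrix f (fun a : {i // i ∈ S} => (a : Fin N))
          * P.submatrix (fun a : {i // i ∈ S} => (a : Fin N)) g
      + M.submatrix f (fun a : {i // i ∈ Sᶜ} => (a : Fin N))
          * P.submatrix (fun a : {i // i ∈ Sᶜ} => (a : Fin N)) g := by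
  classical
  ext i j
  simp only [Matrix.add_apply, Matrix.mul_apply, Matrix.submatrix_apply]
  rw [Finset.sum_coe_sort S (fun k => M (f i) k * P k (g j)),
    Finset.sum_coe_sort Sᶜ (fun k => M (f i) k * P k (g j))]
  exact (Finset.sum_add_sum_compl S _).symm

/-- With `Z = I - A²`, `R₀ = μ² Z⁻¹`, `R₁ = A R₀`, the rough estimate
`Â = [R₁]_Ω ([R₀]_Ω)⁻¹` equals `A_Ω + A_{ΩΩ'} (I - [A²]_{Ω'})⁻¹ [A²]_{Ω'Ω}`. -/
theorem rough_estimate_decomposition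
    {N : ℕ} (μ : ℝ) (hμ : μ ≠ 0)
    (A : Matrix (Fin N) (Fin N) ℝ) (hsymm : A.IsSymm)
    (hspec : ∀ z ∈ spectrum ℝ A, |z| < 1)
    (S : Finset (Fin N)) :
    ((A * (μ ^ 2 • (1 - A * A)⁻¹)).submatrix
        (fun a : {i // i ∈ S} => (a : Fin N)) (fun a : {i // i ∈ S} => (a : Fin N)))
      * ((μ ^ 2 • (1 - A * A)⁻¹).submatrix
        (fun a : {i // i ∈ S} => (a : Fin N)) (fun a : {i // i ∈ S} => (a : Fin N)))⁻¹
    = A.submatrix (fun a : {i // i ∈ S} => (a : Fin N)) (fun a : {i // i ∈ S} => (a : Fin N))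
      + A.submatrix (fun a : {i // i ∈ S} => (a : Fin N)) (fun a : {i // i ∈ Sᶜ} => (a : Fin N))
        * (1 - (A * A).submatrix (fun a : {i // i ∈ Sᶜ} => (a : Fin N))
              (fun a : {i // i ∈ Sᶜ} => (a : Fin N)))⁻¹
        * (A * A).submatrix (fun a : {i // i ∈ Sᶜ} => (a : Fin N))
              (fun a : {i // i ∈ S} => (a : Fin N)) := by
  classical
  have hZ : (1 - A * A).PosDef := posDef_one_sub_sq A hsymm hspec
  set eS : {i // i ∈ S} → Fin N := fun a : {i // i ∈ S} => (a : Fin N) with heS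
  set eC : {i // i ∈ Sᶜ} → Fin N := fun a : {i // i ∈ Sᶜ} => (a : Fin N) with heC
  set Z : Matrix (Fin N) (Fin N) ℝ := 1 - A * A with hZdef
  set W : Matrix (Fin N) (Fin N) ℝ := Z⁻¹ with hWdef
  have hW : W.PosDef := hZ.inv
  have hWss : (W.submatrix eS eS).PosDef := posDef_submatrix_finset hW S
  have hZcc : (Z.submatrix eC eC).PosDef := posDef_submatrix_finset hZ Sᶜ
  have hWssdet : IsUnit (W.submatrix eS eS).det := (Matrix.isUnit_iff_isUnit_det _).1 hWss.isUnit
  have hZccdet : IsUnit (Z.submatrix eC eC).det := (Matrix.isUnit_iff_isUnit_det _).1 hZcc.isUnit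
  have hWssinv : W.submatrix eS eS * (W.submatrix eS eS)⁻¹ = 1 := Matrix.mul_nonsing_inv _ hWssdet
  have hZW : Z * W = 1 := Matrix.mul_nonsing_inv _ ((Matrix.isUnit_iff_isUnit_det _).1 hZ.isUnit)
  -- submatrices of the identity
  have honeCS : (1 : Matrix (Fin N) (Fin N) ℝ).submatrix eC eS = 0 := by
    ext i j
    have hne : (i : Fin N) ≠ (j : Fin N) := by
      intro h
      have hi := i.2
      rw [Finset.mem_compl] at hi
      exact hi (h ▸ j.2)
    simp [Matrix.submatrix_apply, Matrix.one_apply_ne hne]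
    exact Matrix.one_apply_ne hne
  have hZccEq : Z.submatrix eC eC = 1 - (A * A).submatrix eC eC := by
    ext i j
    by_cases h : i = j
    · simp [hZdef, Matrix.submatrix_apply, Matrix.sub_apply, h, Matrix.one_apply_eq]
    · have hne : (i : Fin N) ≠ (j : Fin N) := fun hc => h (Subtype.ext hc)
      simp [hZdef, Matrix.submatrix_apply, Matrix.sub_apply, Matrix.one_apply_ne hne,
        Matrix.one_apply_ne h]
      exact Matrix.one_apply_ne hne
  have hZcsEq : Z.submatrix eC eS = -((A * A).submatrix eC eS) := by
    have : Z.submatrix eC eS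
        = (1 : Matrix (Fin N) (Fin N) ℝ).submatrix eC eS - (A * A).submatrix eC eS := by
      rw [hZdef]; rfl
    rw [this, honeCS, zero_sub]
  -- block identity from Z * W = 1
  have hblock : Z.submatrix eC eS * W.submatrix eS eS + Z.submatrix eC eC * W.submatrix eC eS
      = 0 := by
    have h := congrArg (fun M : Matrix (Fin N) (Fin N) ℝ => M.submatrix eC eS) hZW
    rw [submatrix_mul_split S Z W eC eS] at h
    rw [h, honeCS]
  have hkey : Z.submatrix eC eC * (W.submatrix eC eS * (W.submatrix eS eS)⁻¹)
      = -(Z.submatrix eC eS) := by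
    have h1 : Z.submatrix eC eC * W.submatrix eC eS = -(Z.submatrix eC eS * W.submatrix eS eS) :=
      eq_neg_of_add_eq_zero_right (by rw [add_comm] at hblock; rwa [add_comm])
    calc Z.submatrix eC eC * (W.submatrix eC eS * (W.submatrix eS eS)⁻¹)
        = (Z.submatrix eC eC * W.submatrix eC eS) * (W.submatrix eS eS)⁻¹ := by
          rw [Matrix.mul_assoc]
      _ = -(Z.submatrix eC eS * W.submatrix eS eS) * (W.submatrix eS eS)⁻¹ := by rw [h1]
      _ = -(Z.submatrix eC eS * (W.submatrix eS eS * (W.submatrix eS eS)⁻¹)) := by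
          rw [Matrix.neg_mul, Matrix.mul_assoc]
      _ = -(Z.submatrix eC eS) := by rw [hWssinv, Matrix.mul_one]
  have hratio : W.submatrix eC eS * (W.submatrix eS eS)⁻¹
      = (Z.submatrix eC eC)⁻¹ * -(Z.submatrix eC eS) := by
    have := congrArg (fun M => (Z.submatrix eC eC)⁻¹ * M) hkey
    rwa [← Matrix.mul_assoc, Matrix.nonsing_inv_mul _ hZccdet, Matrix.one_mul] at this
  -- the scalar μ² cancels
  have hμ2 : (μ ^ 2 : ℝ) ≠ 0 := pow_ne_zero 2 hμ
  have : Invertible (μ ^ 2 : ℝ) := invertibleOfNonzero hμ2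
  have hLHS : (A * (μ ^ 2 • W)).submatrix eS eS * ((μ ^ 2 • W).submatrix eS eS)⁻¹
      = (A * W).submatrix eS eS * (W.submatrix eS eS)⁻¹ := by
    have hsmulinv : (μ ^ 2 • W.submatrix eS eS)⁻¹ = (μ ^ 2)⁻¹ • (W.submatrix eS eS)⁻¹ := by
      apply Matrix.inv_eq_right_inv
      rw [smul_mul_smul_comm, mul_inv_cancel₀ hμ2, hWssinv, one_smul]
    rw [mul_smul_comm, Matrix.submatrix_smul, Matrix.submatrix_smul]
    simp only [Pi.smul_apply]
    rw [hsmulinv, smul_mul_smul_comm, mul_inv_cancel₀ hμ2, one_smul]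
  rw [hLHS]
  -- split and finish
  rw [submatrix_mul_split S A W eS eS, Matrix.add_mul, Matrix.mul_assoc, Matrix.mul_assoc,
    hWssinv, Matrix.mul_one, hratio, hZccEq, hZcsEq, neg_neg, ← Matrix.mul_assoc]
end

section
/- In an Erdős–Rényi graph G(N, p_N) with p_N = (ln N + c_N)/N and self-loops at every node, conditionally on the event that edge (i,j) is present, the probability that the maximal degree exceeds e·N·p_N is at most (e + 2e²/N)·e^{-c_N}. In particular this probability tends to 0 if c_N → ∞. -/
open MeasureTheory ProbabilityTheory Finset BigOperators
open scoped ENNReal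

private lemma lintegral_prod_indep {Ω ι : Type*} [MeasurableSpace Ω] {μ : Measure Ω}
    [IsProbabilityMeasure μ] {X : ι → Ω → ℕ}
    (hind : iIndepFun X μ) (hX : ∀ q, Measurable (X q))
    (F : ι → ℕ → ℝ≥0∞) (s : Finset ι) :
    ∫⁻ ω, ∏ q ∈ s, F q (X q ω) ∂μ = ∏ q ∈ s, ∫⁻ ω, F q (X q ω) ∂μ := by
  classical
  set f : ι → Ω → ℝ≥0∞ := fun q ω => F q (X q ω) with hf
  have hfm : ∀ q, Measurable (f q) := fun q => measurable_from_top.comp (hX q)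
  have hcomp : iIndepFun f μ :=
    hind.comp (fun q => F q) (fun q => measurable_from_top)
  induction s using Finset.cons_induction with
  | empty => simp
  | cons a s ha ih =>
    have hindep : IndepFun (f a) (fun ω => ∏ j ∈ s, f j ω) μ := by
      have h := (hcomp.indepFun_finsetProd_of_notMem hfm ha).symm
      have hfn : (∏ j ∈ s, f j) = fun ω => ∏ j ∈ s, f j ω := by
        funext ω; exact Finset.prod_apply ω s f
      rwa [hfn] at h
    have hmeasP : Measurable (fun ω => ∏ j ∈ s, f j ω) :=
      Finset.measurable_prod _ fun q _ => hfm q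
    have hstep := lintegral_mul_eq_lintegral_mul_lintegral_of_indepFun (hfm a) hmeasP hindep
    calc ∫⁻ ω, ∏ q ∈ Finset.cons a s ha, F q (X q ω) ∂μ
        = ∫⁻ ω, ((f a) * fun ω' => ∏ j ∈ s, f j ω') ω ∂μ := by
          refine lintegral_congr fun ω => ?_
          simp [Finset.prod_insert ha, hf]
      _ = (∫⁻ ω, f a ω ∂μ) * ∫⁻ ω, ∏ j ∈ s, f j ω ∂μ := hstep
      _ = ∏ q ∈ Finset.cons a s ha, ∫⁻ ω, F q (X q ω) ∂μ := by
          rw [Finset.prod_cons, ih]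

private lemma lintegral_comp_binary {Ω : Type*} [MeasurableSpace Ω] {μ : Measure Ω}
    [IsProbabilityMeasure μ] {X : Ω → ℕ} (hX : Measurable X)
    (h01 : ∀ ω, X ω = 0 ∨ X ω = 1) (F : ℕ → ℝ≥0∞) :
    ∫⁻ ω, F (X ω) ∂μ = F 1 * μ {ω | X ω = 1} + F 0 * (1 - μ {ω | X ω = 1}) := by
  have hA : MeasurableSet {ω | X ω = 1} := hX (measurableSet_singleton 1)
  have hpt : (fun ω => F (X ω))
      = fun ω => {ω | X ω = 1}.indicator (fun _ => F 1) ω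
          + {ω | X ω = 1}ᶜ.indicator (fun _ => F 0) ω := by
    funext ω
    rcases h01 ω with h | h <;> simp [Set.indicator_apply, h]
  rw [hpt, lintegral_add_left (measurable_const.indicator hA),
    lintegral_indicator hA _, lintegral_indicator hA.compl _,
    setLIntegral_const, setLIntegral_const, prob_compl_eq_one_sub hA]


/-- Maximal-degree bound for an Erdős–Rényi graph with `p = (ln N + c)/N` and self-loops:
conditionally on the edge `(i,j)` being present, the probability that the maximal degree
is at least `e·N·p` is at most `(e + 2e²/N)·e^{-c}`. -/
theorem max_degree_conditional_bound
    {Ω : Type*} [MeasurableSpace Ω] (P : Measure Ω) [IsProbabilityMeasure P]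
    {N : ℕ} (hN : 0 < N) (p c : ℝ) (hp : p = (Real.log N + c) / N)
    (hp0 : 0 ≤ p) (hp1 : p ≤ 1)
    (g : Fin N → Fin N → Ω → ℕ)
    (hmeas : ∀ i j, Measurable (g i j))
    (h01 : ∀ i j ω, g i j ω = 0 ∨ g i j ω = 1)
    (hsymm : ∀ i j ω, g i j ω = g j i ω)
    (hself : ∀ i ω, g i i ω = 1)
    (hbern : ∀ i j, i ≠ j → P {ω | g i j ω = 1} = ENNReal.ofReal p)
    (hindep : iIndepFun
        (fun (q : {q : Fin N × Fin N // q.1 < q.2}) ω => g q.1.1 q.1.2 ω) P)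
    (i j : Fin N) (hij : i ≠ j) :
    (ProbabilityTheory.cond P {ω | g i j ω = 1})
        {ω | Real.exp 1 * ((N : ℝ) * p)
              ≤ ((Finset.univ.sup fun ℓ : Fin N => ∑ k, g ℓ k ω : ℕ) : ℝ)}
      ≤ ENNReal.ofReal ((Real.exp 1 + 2 * Real.exp 1 ^ 2 / N) * Real.exp (-c)) := by
  classical
  set e1 : ℝ := Real.exp 1 with he1
  have he1_pos : 0 < e1 := Real.exp_pos 1
  have he1_ge1 : 1 ≤ e1 := by
    have := Real.add_one_le_exp (1 : ℝ); rw [← he1] at this; linarith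
  have hNR : (0 : ℝ) < N := by exact_mod_cast hN
  have hNp : (N : ℝ) * p = Real.log N + c := by
    rw [hp]; field_simp
  set t : ℝ := e1 * ((N : ℝ) * p) with ht
  set A : Set Ω := {ω | g i j ω = 1} with hA_def
  have hAmeas : MeasurableSet A := hmeas i j (measurableSet_singleton 1)
  set Ev : Fin N → Set Ω := fun ℓ => {ω | t ≤ ((∑ k, g ℓ k ω : ℕ) : ℝ)} with hEv
  set ε : ℝ≥0∞ := ENNReal.ofReal (Real.exp (t - 1)) with hε
  set E : Set Ω :=
    {ω | t ≤ ((Finset.univ.sup fun ℓ : Fin N => ∑ k, g ℓ k ω : ℕ) : ℝ)} with hE_def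
  -- the distinguished pair π and the pairing function pr
  obtain ⟨π, hπc⟩ : ∃ ρ : {q : Fin N × Fin N // q.1 < q.2},
      (ρ.1.1 = i ∧ ρ.1.2 = j) ∨ (ρ.1.1 = j ∧ ρ.1.2 = i) := by
    rcases hij.lt_or_gt with h | h
    · exact ⟨⟨(i, j), h⟩, Or.inl ⟨rfl, rfl⟩⟩
    · exact ⟨⟨(j, i), h⟩, Or.inr ⟨rfl, rfl⟩⟩
  obtain ⟨pr, hpr⟩ : ∃ pr : Fin N → Fin N → {q : Fin N × Fin N // q.1 < q.2},
      ∀ a b, a ≠ b → ((pr a b).1.1 = a ∧ (pr a b).1.2 = b) ∨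
        ((pr a b).1.1 = b ∧ (pr a b).1.2 = a) := by
    refine ⟨fun a b => if h : a < b then ⟨(a, b), h⟩ else
      if h' : b < a then ⟨(b, a), h'⟩ else π, fun a b hab => ?_⟩
    rcases hab.lt_or_gt with h | h
    · left; simp [h]
    · right; simp [h, asymm h]
  have huniq : ∀ (ρ ρ' : {q : Fin N × Fin N // q.1 < q.2}) (a b : Fin N),
      ((ρ.1.1 = a ∧ ρ.1.2 = b) ∨ (ρ.1.1 = b ∧ ρ.1.2 = a)) →
      ((ρ'.1.1 = a ∧ ρ'.1.2 = b) ∨ (ρ'.1.1 = b ∧ ρ'.1.2 = a)) → ρ = ρ' := by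
    rintro ⟨⟨x, y⟩, hlt⟩ ⟨⟨x', y'⟩, hlt'⟩ a b h h'
    simp only at h h' hlt hlt'
    rcases h with ⟨rfl, rfl⟩ | ⟨rfl, rfl⟩ <;> rcases h' with ⟨h1, h2⟩ | ⟨h1, h2⟩ <;>
      subst h1 <;> subst h2 <;>
      first
        | rfl
        | exact (lt_asymm hlt hlt').elim
  have hXq_eval : ∀ (ρ : {q : Fin N × Fin N // q.1 < q.2}) (a b : Fin N),
      ((ρ.1.1 = a ∧ ρ.1.2 = b) ∨ (ρ.1.1 = b ∧ ρ.1.2 = a)) →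
      ∀ ω, g ρ.1.1 ρ.1.2 ω = g a b ω := by
    rintro ρ a b (⟨h1, h2⟩ | ⟨h1, h2⟩) ω
    · rw [h1, h2]
    · rw [h1, h2, hsymm]
  have hXπ : ∀ ω, g π.1.1 π.1.2 ω = g i j ω := hXq_eval π i j hπc
  have hpr_eval : ∀ (a b : Fin N), a ≠ b → ∀ ω,
      g (pr a b).1.1 (pr a b).1.2 ω = g a b ω :=
    fun a b hab => hXq_eval _ a b (hpr a b hab)
  have hpr_inj : ∀ ℓ : Fin N, ∀ k ∈ univ.erase ℓ, ∀ k' ∈ univ.erase ℓ,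
      pr ℓ k = pr ℓ k' → k = k' := by
    intro ℓ k hk k' hk' hkk'
    have hkℓ : k ≠ ℓ := (Finset.mem_erase.mp hk).1
    have hk'ℓ : k' ≠ ℓ := (Finset.mem_erase.mp hk').1
    have e1' := congrArg (fun q : {q : Fin N × Fin N // q.1 < q.2} => q.1.1) hkk'
    have e2' := congrArg (fun q : {q : Fin N × Fin N // q.1 < q.2} => q.1.2) hkk'
    rcases hpr ℓ k (Ne.symm hkℓ) with ⟨a1, a2⟩ | ⟨a1, a2⟩ <;>
      rcases hpr ℓ k' (Ne.symm hk'ℓ) with ⟨b1, b2⟩ | ⟨b1, b2⟩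
    · rw [a2, b2] at e2'; exact e2'
    · rw [a1, b1] at e1'; exact absurd e1'.symm hk'ℓ
    · rw [a1, b1] at e1'; exact absurd e1' hkℓ
    · rw [a1, b1] at e1'; exact e1'
  -- basic integrals
  have h01q : ∀ (q : {q : Fin N × Fin N // q.1 < q.2}) ω,
      g q.1.1 q.1.2 ω = 0 ∨ g q.1.1 q.1.2 ω = 1 := fun q ω => h01 _ _ ω
  have hberq : ∀ q : {q : Fin N × Fin N // q.1 < q.2},
      P {ω | g q.1.1 q.1.2 ω = 1} = ENNReal.ofReal p := fun q => hbern _ _ (ne_of_lt q.2)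
  set hfun : ℕ → ℝ≥0∞ := fun n => if n = 1 then ENNReal.ofReal e1 else 1 with hhfun
  set ind : ℕ → ℝ≥0∞ := fun n => if n = 1 then 1 else 0 with hind_def
  set FE : ℕ → ℝ≥0∞ := fun n => if n = 1 then ENNReal.ofReal e1 else 0 with hFE_def
  set M : ℝ≥0∞ := ENNReal.ofReal (1 + (e1 - 1) * p) with hM
  have hint_h : ∀ q : {q : Fin N × Fin N // q.1 < q.2},
      ∫⁻ ω, hfun (g q.1.1 q.1.2 ω) ∂P = M := by
    intro q
    rw [lintegral_comp_binary (hmeas _ _) (h01q q) hfun, hberq q]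
    have h1 : hfun 1 = ENNReal.ofReal e1 := if_pos rfl
    have h0 : hfun 0 = 1 := if_neg (by norm_num)
    rw [h1, h0, one_mul, ← ENNReal.ofReal_one, ← ENNReal.ofReal_sub _ hp0,
      ← ENNReal.ofReal_mul he1_pos.le,
      ← ENNReal.ofReal_add (by positivity) (by linarith), hM]
    congr 1; ring
  have hint_ind : ∀ q : {q : Fin N × Fin N // q.1 < q.2},
      ∫⁻ ω, ind (g q.1.1 q.1.2 ω) ∂P = ENNReal.ofReal p := by
    intro q
    rw [lintegral_comp_binary (hmeas _ _) (h01q q) ind, hberq q]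
    simp [hind_def]
  have hint_FE : ∀ q : {q : Fin N × Fin N // q.1 < q.2},
      ∫⁻ ω, FE (g q.1.1 q.1.2 ω) ∂P = ENNReal.ofReal e1 * ENNReal.ofReal p := by
    intro q
    rw [lintegral_comp_binary (hmeas _ _) (h01q q) FE, hberq q]
    simp [hFE_def]
  -- sums/products over the erased set
  have hsum_erase : ∀ (ℓ : Fin N) ω,
      ∑ k ∈ univ.erase ℓ, (g ℓ k ω : ℝ) = ((∑ k, g ℓ k ω : ℕ) : ℝ) - 1 := by
    intro ℓ ω
    have h1 : (g ℓ ℓ ω : ℝ) + ∑ k ∈ univ.erase ℓ, (g ℓ k ω : ℝ)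
        = ∑ k, (g ℓ k ω : ℝ) := Finset.add_sum_erase _ (fun k => (g ℓ k ω : ℝ)) (mem_univ ℓ)
    have h2 : (g ℓ ℓ ω : ℝ) = 1 := by rw [hself]; norm_num
    have h3 : ((∑ k, g ℓ k ω : ℕ) : ℝ) = ∑ k, (g ℓ k ω : ℝ) := by push_cast; rfl
    linarith
  have hprod_eq : ∀ (ℓ : Fin N) ω, ∏ k ∈ univ.erase ℓ, hfun (g ℓ k ω)
      = ENNReal.ofReal (Real.exp (∑ k ∈ univ.erase ℓ, (g ℓ k ω : ℝ))) := by
    intro ℓ ω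
    rw [Real.exp_sum, ENNReal.ofReal_prod_of_nonneg (fun k _ => (Real.exp_pos _).le)]
    refine Finset.prod_congr rfl fun k _ => ?_
    rcases h01 ℓ k ω with h | h <;> simp [hhfun, h, Real.exp_zero, he1]
  have hTcard : ∀ ℓ : Fin N, ((univ.erase ℓ).image (pr ℓ)).card = N - 1 := by
    intro ℓ
    rw [Finset.card_image_of_injOn
      (fun a ha b hb hab => hpr_inj ℓ a (Finset.mem_coe.mp ha) b (Finset.mem_coe.mp hb) hab),
      Finset.card_erase_of_mem (mem_univ ℓ), Finset.card_univ, Fintype.card_fin]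
  have hTprod : ∀ (ℓ : Fin N) (Φ : {q : Fin N × Fin N // q.1 < q.2} → ℝ≥0∞),
      ∏ q ∈ (univ.erase ℓ).image (pr ℓ), Φ q = ∏ k ∈ univ.erase ℓ, Φ (pr ℓ k) :=
    fun ℓ Φ => Finset.prod_image (hpr_inj ℓ)
  -- lower bound on the product over the erased pairs
  have hlow : ∀ (ℓ : Fin N) ω, ω ∈ Ev ℓ →
      ε ≤ ∏ k ∈ univ.erase ℓ, hfun (g ℓ k ω) := by
    intro ℓ ω hω
    rw [hprod_eq ℓ ω, hε]
    apply ENNReal.ofReal_le_ofReal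
    apply Real.exp_le_exp.mpr
    rw [hsum_erase ℓ ω]
    have : t ≤ ((∑ k, g ℓ k ω : ℕ) : ℝ) := hω
    linarith
  -- Markov / Chernoff step
  have hεne : ε ≠ 0 := by
    rw [hε]; exact (ENNReal.ofReal_pos.mpr (Real.exp_pos _)).ne'
  have hεtop : ε ≠ ∞ := by rw [hε]; exact ENNReal.ofReal_ne_top
  have markov : ∀ (B : Set Ω) (s : Finset {q : Fin N × Fin N // q.1 < q.2})
      (F : {q : Fin N × Fin N // q.1 < q.2} → ℕ → ℝ≥0∞),
      (∀ ω ∈ B, ε ≤ ∏ q ∈ s, F q (g q.1.1 q.1.2 ω)) →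
      P B ≤ ε⁻¹ * ∏ q ∈ s, ∫⁻ ω, F q (g q.1.1 q.1.2 ω) ∂P := by
    intro B s F hB
    have hYmeas : Measurable (fun ω => ∏ q ∈ s, F q (g q.1.1 q.1.2 ω)) :=
      Finset.measurable_prod _ fun q _ => measurable_from_top.comp (hmeas _ _)
    have h1 : P B ≤ P {ω | ε ≤ ∏ q ∈ s, F q (g q.1.1 q.1.2 ω)} :=
      measure_mono fun ω hω => hB ω hω
    have h2 := mul_meas_ge_le_lintegral₀ (μ := P) hYmeas.aemeasurable ε
    have h3 := lintegral_prod_indep hindep (fun q => hmeas _ _) F s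
    calc P B = ε⁻¹ * (ε * P B) := by
          rw [← mul_assoc, ENNReal.inv_mul_cancel hεne hεtop, one_mul]
      _ ≤ ε⁻¹ * (ε * P {ω | ε ≤ ∏ q ∈ s, F q (g q.1.1 q.1.2 ω)}) := by gcongr
      _ ≤ ε⁻¹ * ∫⁻ ω, ∏ q ∈ s, F q (g q.1.1 q.1.2 ω) ∂P := by gcongr
      _ = ε⁻¹ * ∏ q ∈ s, ∫⁻ ω, F q (g q.1.1 q.1.2 ω) ∂P := by rw [h3]
  -- arithmetic bound
  set n1 : ℕ := N - 1 with hn1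
  set Creal : ℝ := Real.exp (1 - t + (e1 - 1) * p * n1) with hCreal
  have hMle : M ^ n1 ≤ ENNReal.ofReal (Real.exp ((e1 - 1) * p * n1)) := by
    rw [hM, ← ENNReal.ofReal_pow (by nlinarith)]
    apply ENNReal.ofReal_le_ofReal
    calc (1 + (e1 - 1) * p) ^ n1 ≤ Real.exp ((e1 - 1) * p) ^ n1 := by
          apply pow_le_pow_left₀ (by nlinarith)
          have := Real.add_one_le_exp ((e1 - 1) * p)
          linarith
      _ = Real.exp ((e1 - 1) * p * n1) := by
          rw [← Real.exp_nat_mul]; ring_nf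
  have hM1 : (1 : ℝ≥0∞) ≤ M := by
    rw [hM, ← ENNReal.ofReal_one]
    apply ENNReal.ofReal_le_ofReal
    nlinarith
  have hεinv : ε⁻¹ = ENNReal.ofReal (Real.exp (1 - t)) := by
    rw [hε, ← ENNReal.ofReal_inv_of_pos (Real.exp_pos _), ← Real.exp_neg]
    congr 1; ring
  have harith : ∀ (cc : ℝ) (k : ℕ), 0 ≤ cc → k ≤ n1 →
      ε⁻¹ * (ENNReal.ofReal cc * (ENNReal.ofReal p * M ^ k))
        ≤ ENNReal.ofReal p * ENNReal.ofReal (cc * Creal) := by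
    intro cc k hcc hk
    have hMk : M ^ k ≤ ENNReal.ofReal (Real.exp ((e1 - 1) * p * n1)) :=
      le_trans (pow_le_pow_right₀ hM1 hk) hMle
    calc ε⁻¹ * (ENNReal.ofReal cc * (ENNReal.ofReal p * M ^ k))
        ≤ ε⁻¹ * (ENNReal.ofReal cc *
            (ENNReal.ofReal p * ENNReal.ofReal (Real.exp ((e1 - 1) * p * n1)))) := by gcongr
      _ = ENNReal.ofReal p * (ENNReal.ofReal (Real.exp (1 - t)) *
            (ENNReal.ofReal cc * ENNReal.ofReal (Real.exp ((e1 - 1) * p * n1)))) := by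
          rw [hεinv]; ring
      _ = ENNReal.ofReal p * ENNReal.ofReal (cc * Creal) := by
          rw [← ENNReal.ofReal_mul hcc, ← ENNReal.ofReal_mul (Real.exp_pos _).le]
          congr 1
          rw [hCreal, Real.exp_add]
          ring
  -- key bound for each node
  have key : ∀ ℓ : Fin N, P (A ∩ Ev ℓ) ≤ ENNReal.ofReal p *
      ENNReal.ofReal ((if ℓ = i ∨ ℓ = j then e1 else 1) * Creal) := by
    intro ℓ
    have hTprod_h : ∀ ω, ∏ q ∈ (univ.erase ℓ).image (pr ℓ), hfun (g q.1.1 q.1.2 ω)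
        = ∏ k ∈ univ.erase ℓ, hfun (g ℓ k ω) := by
      intro ω
      rw [hTprod ℓ]
      exact Finset.prod_congr rfl fun k hk => by
        rw [hpr_eval ℓ k (Ne.symm (Finset.mem_erase.mp hk).1)]
    by_cases hmem : ℓ = i ∨ ℓ = j
    · -- ℓ is one of the endpoints
      obtain ⟨ℓ2, hℓ2, hπpr⟩ : ∃ ℓ2, ℓ2 ≠ ℓ ∧ π = pr ℓ ℓ2 := by
        rcases hmem with rfl | rfl
        · exact ⟨j, Ne.symm hij, huniq π (pr ℓ j) ℓ j hπc (hpr ℓ j hij)⟩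
        · refine ⟨i, hij, huniq π (pr ℓ i) i ℓ hπc ?_⟩
          rcases hpr ℓ i (Ne.symm hij) with h | h
          exacts [Or.inr h, Or.inl h]
      have hπmem : π ∈ (univ.erase ℓ).image (pr ℓ) :=
        Finset.mem_image.mpr ⟨ℓ2, Finset.mem_erase.mpr ⟨hℓ2, mem_univ _⟩, hπpr.symm⟩
      have hkey := markov (A ∩ Ev ℓ) ((univ.erase ℓ).image (pr ℓ))
        (fun q => if q = π then FE else hfun) ?_
      · have hint : ∏ q ∈ (univ.erase ℓ).image (pr ℓ),
            ∫⁻ ω, (if q = π then FE else hfun) (g q.1.1 q.1.2 ω) ∂P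
            = ENNReal.ofReal e1 * (ENNReal.ofReal p *
                M ^ (((univ.erase ℓ).image (pr ℓ)).erase π).card) := by
          rw [← Finset.mul_prod_erase _ _ hπmem]
          simp only [reduceIte]
          rw [hint_FE π,
            Finset.prod_congr rfl (fun q hq => by
              simp only [if_neg (Finset.mem_erase.mp hq).1]
              exact hint_h q),
            Finset.prod_const, mul_assoc]
        rw [hint] at hkey
        refine le_trans hkey ?_
        have hcard : (((univ.erase ℓ).image (pr ℓ)).erase π).card ≤ n1 := by
          rw [← hTcard ℓ]; exact Finset.card_erase_le
        rw [if_pos hmem]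
        exact le_trans (le_of_eq (by ring)) (harith e1 _ he1_pos.le hcard)
      · intro ω hω
        have hprodA : ∏ q ∈ (univ.erase ℓ).image (pr ℓ),
            (if q = π then FE else hfun) (g q.1.1 q.1.2 ω)
            = ∏ q ∈ (univ.erase ℓ).image (pr ℓ), hfun (g q.1.1 q.1.2 ω) := by
          refine Finset.prod_congr rfl fun q hq => ?_
          by_cases hqπ : q = π
          · subst hqπ
            have hq1 : g q.1.1 q.1.2 ω = 1 := by rw [hXπ]; exact hω.1
            simp [hq1, hhfun, hFE_def]
          · simp [hqπ]
        rw [hprodA, hTprod_h ω]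
        exact hlow ℓ ω hω.2
    · -- ℓ is not an endpoint
      push_neg at hmem
      have hπT : π ∉ (univ.erase ℓ).image (pr ℓ) := by
        intro hmem'
        obtain ⟨k, hk, hpk⟩ := Finset.mem_image.mp hmem'
        have hkℓ : k ≠ ℓ := (Finset.mem_erase.mp hk).1
        have e1' := congrArg (fun q : {q : Fin N × Fin N // q.1 < q.2} => q.1.1) hpk
        have e2' := congrArg (fun q : {q : Fin N × Fin N // q.1 < q.2} => q.1.2) hpk
        rcases hpr ℓ k (Ne.symm hkℓ) with ⟨a1, a2⟩ | ⟨a1, a2⟩ <;>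
          rcases hπc with ⟨b1, b2⟩ | ⟨b1, b2⟩
        · rw [a1, b1] at e1'; exact hmem.1 e1'
        · rw [a1, b1] at e1'; exact hmem.2 e1'
        · rw [a2, b2] at e2'; exact hmem.2 e2'
        · rw [a2, b2] at e2'; exact hmem.1 e2'
      have hkey := markov (A ∩ Ev ℓ) (insert π ((univ.erase ℓ).image (pr ℓ)))
        (fun q => if q = π then ind else hfun) ?_
      · have hint : ∏ q ∈ insert π ((univ.erase ℓ).image (pr ℓ)),
            ∫⁻ ω, (if q = π then ind else hfun) (g q.1.1 q.1.2 ω) ∂P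
            = ENNReal.ofReal p * M ^ n1 := by
          rw [Finset.prod_insert hπT]
          simp only [reduceIte]
          rw [hint_ind π,
            Finset.prod_congr rfl (fun q hq => by
              simp only [if_neg (ne_of_mem_of_not_mem hq hπT)]
              exact hint_h q),
            Finset.prod_const, hTcard ℓ]
        rw [hint] at hkey
        refine le_trans hkey ?_
        have h4 : (if ℓ = i ∨ ℓ = j then e1 else 1) = 1 := if_neg (by tauto)
        rw [h4, one_mul]
        have h5 := harith 1 n1 zero_le_one le_rfl
        simp only [ENNReal.ofReal_one, one_mul] at h5
        exact h5
      · intro ω hω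
        rw [Finset.prod_insert hπT]
        simp only [reduceIte]
        have hq1 : g π.1.1 π.1.2 ω = 1 := by rw [hXπ]; exact hω.1
        have h1 : ind (g π.1.1 π.1.2 ω) = 1 := by rw [hq1]; exact if_pos rfl
        rw [h1, one_mul,
          Finset.prod_congr rfl (fun q hq => by
            rw [if_neg (ne_of_mem_of_not_mem hq hπT)]),
          hTprod_h ω]
        exact hlow ℓ ω hω.2
  -- union bound
  have hEsub : A ∩ E ⊆ ⋃ ℓ, A ∩ Ev ℓ := by
    intro ω hω
    obtain ⟨ℓ0, -, hℓ0⟩ := Finset.exists_mem_eq_sup univ ⟨i, mem_univ i⟩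
      (fun ℓ : Fin N => ∑ k, g ℓ k ω)
    refine Set.mem_iUnion.mpr ⟨ℓ0, hω.1, ?_⟩
    have hE' : t ≤ ((Finset.univ.sup fun ℓ : Fin N => ∑ k, g ℓ k ω : ℕ) : ℝ) := hω.2
    rw [hℓ0] at hE'
    exact hE'
  have hUnion : P (A ∩ E) ≤ ∑ ℓ : Fin N, P (A ∩ Ev ℓ) := by
    calc P (A ∩ E) ≤ P (⋃ ℓ, A ∩ Ev ℓ) := measure_mono hEsub
      _ ≤ ∑' ℓ, P (A ∩ Ev ℓ) := measure_iUnion_le _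
      _ = ∑ ℓ, P (A ∩ Ev ℓ) := tsum_fintype _
  -- summing the bounds
  have hsum_c : ∑ ℓ : Fin N, (if ℓ = i ∨ ℓ = j then e1 else 1) = (N : ℝ) + 2 * (e1 - 1) := by
    have hterm : ∀ ℓ : Fin N, (if ℓ = i ∨ ℓ = j then e1 else 1 : ℝ)
        = 1 + ((if ℓ = i then e1 - 1 else 0) + (if ℓ = j then e1 - 1 else 0)) := by
      intro ℓ
      by_cases h1 : ℓ = i
      · subst h1
        simp [hij]
      · by_cases h2 : ℓ = j
        · subst h2
          simp [h1]
        · simp [h1, h2]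
    rw [Finset.sum_congr rfl fun ℓ _ => hterm ℓ, Finset.sum_add_distrib,
      Finset.sum_add_distrib, Finset.sum_const, Finset.sum_ite_eq' univ i,
      Finset.sum_ite_eq' univ j]
    simp [Finset.card_univ]
    ring
  have hCreal_nonneg : 0 ≤ Creal := (Real.exp_pos _).le
  have hCreal_le : Creal ≤ e1 * (Real.exp (-c) / N) := by
    have hstep : Creal ≤ Real.exp (1 - (N : ℝ) * p) := by
      rw [hCreal]
      apply Real.exp_le_exp.mpr
      have h1 : ((n1 : ℕ) : ℝ) ≤ (N : ℝ) := by
        rw [hn1]; exact_mod_cast Nat.sub_le N 1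
      have h2 : (0 : ℝ) ≤ (e1 - 1) * p := by nlinarith
      have h3 : (e1 - 1) * p * (n1 : ℝ) ≤ (e1 - 1) * p * (N : ℝ) :=
        mul_le_mul_of_nonneg_left h1 h2
      rw [ht]
      nlinarith
    have hexp : Real.exp (1 - (N : ℝ) * p) = e1 * (Real.exp (-c) / N) := by
      rw [hNp, show (1 : ℝ) - (Real.log N + c) = 1 + (-Real.log N + -c) by ring,
        Real.exp_add, Real.exp_add, Real.exp_neg, Real.exp_neg, Real.exp_log hNR, ← he1]
      rw [div_eq_mul_inv]
      ring
    rw [← hexp]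
    exact hstep
  have hsum_bound : ∑ ℓ : Fin N, ENNReal.ofReal p *
        ENNReal.ofReal ((if ℓ = i ∨ ℓ = j then e1 else 1) * Creal)
      ≤ ENNReal.ofReal p * ENNReal.ofReal ((e1 + 2 * e1 ^ 2 / N) * Real.exp (-c)) := by
    rw [← Finset.mul_sum]
    refine mul_le_mul_right ?_ _
    rw [← ENNReal.ofReal_sum_of_nonneg (fun ℓ _ => by
      by_cases h : ℓ = i ∨ ℓ = j <;> simp [h] <;> positivity)]
    apply ENNReal.ofReal_le_ofReal
    rw [← Finset.sum_mul, hsum_c]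
    have hE0 : (0 : ℝ) < Real.exp (-c) := Real.exp_pos _
    calc ((N : ℝ) + 2 * (e1 - 1)) * Creal
        ≤ ((N : ℝ) + 2 * (e1 - 1)) * (e1 * (Real.exp (-c) / N)) := by
          apply mul_le_mul_of_nonneg_left hCreal_le (by nlinarith)
      _ = e1 * Real.exp (-c) + (2 * ((e1 - 1) * e1) / N) * Real.exp (-c) := by
          field_simp
      _ ≤ e1 * Real.exp (-c) + (2 * e1 ^ 2 / N) * Real.exp (-c) := by
          have h2 : 2 * ((e1 - 1) * e1) / (N : ℝ) ≤ 2 * e1 ^ 2 / N :=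
            (div_le_div_iff_of_pos_right hNR).mpr (by nlinarith)
          exact add_le_add_right (mul_le_mul_of_nonneg_right h2 hE0.le) _
      _ = (e1 + 2 * e1 ^ 2 / N) * Real.exp (-c) := by ring
  -- conclusion
  have hfinal : P (A ∩ E) ≤ ENNReal.ofReal p *
      ENNReal.ofReal ((e1 + 2 * e1 ^ 2 / N) * Real.exp (-c)) :=
    le_trans hUnion (le_trans (Finset.sum_le_sum fun ℓ _ => key ℓ) hsum_bound)
  have hcond : ProbabilityTheory.cond P A E = (P A)⁻¹ * P (A ∩ E) :=
    ProbabilityTheory.cond_apply hAmeas P E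
  rw [hcond, hbern i j hij]
  rcases eq_or_lt_of_le hp0 with hpz | hppos
  · have hPA0 : ENNReal.ofReal p = 0 := by rw [← hpz]; simp
    have hPAE : P (A ∩ E) = 0 := by
      have : P (A ∩ E) ≤ P A := measure_mono Set.inter_subset_left
      rw [hbern i j hij, hPA0] at this
      exact le_antisymm this zero_le
    rw [hPAE, mul_zero]
    exact zero_le
  · have hne : ENNReal.ofReal p ≠ 0 := (ENNReal.ofReal_pos.mpr hppos).ne'
    calc (ENNReal.ofReal p)⁻¹ * P (A ∩ E)
        ≤ (ENNReal.ofReal p)⁻¹ * (ENNReal.ofReal p *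
            ENNReal.ofReal ((e1 + 2 * e1 ^ 2 / N) * Real.exp (-c))) := by gcongr
      _ = ENNReal.ofReal ((e1 + 2 * e1 ^ 2 / N) * Real.exp (-c)) := by
          rw [← mul_assoc, ENNReal.inv_mul_cancel hne ENNReal.ofReal_ne_top, one_mul]
end

section
/- Let A be an N×N symmetric nonnegative matrix with row sums 1-μ, μ ∈ (0,1), let B = A², and let Ω′ be any subset of indices with |Ω′| = N - K. Then for every ℓ, the ℓ-th row sum of H = (I - B_{Ω′})^{-1} satisfies Σ_m h_{ℓm} ≤ 1/(μ(2-μ)) = Σ_{k≥0}(1-μ)^{2k}. -/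
open Matrix Finset BigOperators

attribute [local instance] Matrix.linftyOpNormedRing Matrix.linftyOpNormedAlgebra

/-- With `A` symmetric nonnegative, row sums `1-μ`, `B = A²`, `H = (I - B_{Ω'Ω'})⁻¹`:
every row sum of `H` is at most `1/(μ(2-μ)) = Σ_{k≥0} (1-μ)^{2k}`. -/
theorem H_row_sums_le
    {N : ℕ} (μ : ℝ) (hμ0 : 0 < μ) (hμ1 : μ < 1)
    (A : Matrix (Fin N) (Fin N) ℝ) (hsymm : A.IsSymm)
    (hnonneg : ∀ i j, 0 ≤ A i j) (hrow : ∀ i, ∑ j, A i j = 1 - μ)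
    (S : Finset (Fin N))
    (H : Matrix {i // i ∈ Sᶜ} {i // i ∈ Sᶜ} ℝ)
    (hH : H = (1 - (A * A).submatrix (fun i : {i // i ∈ Sᶜ} => (i : Fin N))
              (fun j : {j // j ∈ Sᶜ} => (j : Fin N)))⁻¹) :
    (∀ ℓ, ∑ m, H ℓ m ≤ 1 / (μ * (2 - μ)))
      ∧ 1 / (μ * (2 - μ)) = ∑' k : ℕ, (1 - μ) ^ (2 * k) := by
  set r : ℝ := (1 - μ) ^ 2 with hr_def
  have hμ' : 0 ≤ 1 - μ := by linarith
  have hr0 : 0 ≤ r := by positivity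
  have hr1 : r < 1 := by nlinarith
  set M : Matrix {i // i ∈ Sᶜ} {i // i ∈ Sᶜ} ℝ :=
    (A * A).submatrix (fun i : {i // i ∈ Sᶜ} => (i : Fin N))
      (fun j : {j // j ∈ Sᶜ} => (j : Fin N)) with hM_def
  -- nonnegativity of A*A
  have hB0 : ∀ i j, 0 ≤ (A * A) i j := by
    intro i j
    rw [Matrix.mul_apply]
    exact Finset.sum_nonneg fun k _ => mul_nonneg (hnonneg i k) (hnonneg k j)
  have hM0 : ∀ i j, 0 ≤ M i j := fun i j => hB0 _ _
  -- row sums of A*A equal r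
  have hBrow : ∀ i, ∑ j, (A * A) i j = r := by
    intro i
    simp_rw [Matrix.mul_apply]
    rw [Finset.sum_comm]
    simp_rw [← Finset.mul_sum, hrow]
    rw [← Finset.sum_mul, hrow]
    ring
  -- row sums of M are at most r
  have hMrow : ∀ i, ∑ j, M i j ≤ r := by
    intro i
    have h1 : ∑ j : {j // j ∈ Sᶜ}, M i j = ∑ j ∈ Sᶜ, (A * A) (i : Fin N) j :=
      Finset.sum_coe_sort (Sᶜ) (fun j => (A * A) (i : Fin N) j)
    rw [h1]
    calc ∑ j ∈ Sᶜ, (A * A) (i : Fin N) j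
        ≤ ∑ j, (A * A) (i : Fin N) j :=
          Finset.sum_le_sum_of_subset_of_nonneg (Finset.subset_univ _)
            (fun j _ _ => hB0 _ _)
      _ = r := hBrow _
  -- powers of M: nonnegative entries and row sums ≤ r^k
  have hpow : ∀ k : ℕ, (∀ i j, 0 ≤ (M ^ k) i j) ∧ ∀ i, ∑ j, (M ^ k) i j ≤ r ^ k := by
    intro k
    induction k with
    | zero =>
      constructor
      · intro i j
        simp [Matrix.one_apply]
        positivity
      · intro i
        simp [Matrix.one_apply]
    | succ k ih =>
      have hmul : M ^ (k + 1) = M ^ k * M := pow_succ M k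
      constructor
      · intro i j
        rw [hmul, Matrix.mul_apply]
        exact Finset.sum_nonneg fun t _ => mul_nonneg (ih.1 i t) (hM0 t j)
      · intro i
        rw [hmul]
        simp_rw [Matrix.mul_apply]
        rw [Finset.sum_comm]
        simp_rw [← Finset.mul_sum]
        calc ∑ t, (M ^ k) i t * ∑ j, M t j
            ≤ ∑ t, (M ^ k) i t * r :=
              Finset.sum_le_sum fun t _ => mul_le_mul_of_nonneg_left (hMrow t) (ih.1 i t)
          _ = (∑ t, (M ^ k) i t) * r := by rw [Finset.sum_mul]
          _ ≤ r ^ k * r := mul_le_mul_of_nonneg_right (ih.2 i) hr0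
          _ = r ^ (k + 1) := (pow_succ r k).symm
  -- norm of M is < 1
  have hnorm : ‖M‖ < 1 := by
    rw [Matrix.linfty_opNorm_def]
    have : ((Finset.univ : Finset {i // i ∈ Sᶜ}).sup fun i => ∑ j, ‖M i j‖₊) < 1 := by
      rw [Finset.sup_lt_iff (by norm_num : (⊥ : NNReal) < 1)]
      intro i _
      have : ((∑ j, ‖M i j‖₊ : NNReal) : ℝ) < 1 := by
        push_cast
        calc ∑ j, (‖M i j‖ : ℝ) = ∑ j, M i j := by
              refine Finset.sum_congr rfl fun j _ => ?_
              exact Real.norm_of_nonneg (hM0 i j)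
          _ ≤ r := hMrow i
          _ < 1 := hr1
      exact_mod_cast this
    exact_mod_cast this
  -- H is the Neumann series
  have hHsum : HasSum (fun k : ℕ => M ^ k) H := by
    rw [hH, Matrix.nonsing_inv_eq_ringInverse]
    exact hasSum_geom_series_inverse M hnorm
  -- the row-sum continuous linear map
  have key : ∀ ℓ, HasSum (fun k : ℕ => ∑ m, (M ^ k) ℓ m) (∑ m, H ℓ m) := by
    intro ℓ
    have hbound : ∀ X : Matrix {i // i ∈ Sᶜ} {i // i ∈ Sᶜ} ℝ,
        ‖∑ m, X ℓ m‖ ≤ 1 * ‖X‖ := by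
      intro X
      rw [one_mul]
      calc ‖∑ m, X ℓ m‖ ≤ ∑ m, ‖X ℓ m‖ := norm_sum_le _ _
        _ ≤ ‖X‖ := by
            have : ((∑ m, ‖X ℓ m‖₊ : NNReal) : ℝ) ≤ ‖X‖ := by
              rw [Matrix.linfty_opNorm_def]
              exact_mod_cast Finset.le_sup (f := fun i => ∑ j, ‖X i j‖₊) (Finset.mem_univ ℓ)
            simpa using this
    let f : Matrix {i // i ∈ Sᶜ} {i // i ∈ Sᶜ} ℝ →ₗ[ℝ] ℝ :=
      { toFun := fun X => ∑ m, X ℓ m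
        map_add' := by intro X Y; simp [Finset.sum_add_distrib]
        map_smul' := by intro c X; simp [Finset.mul_sum] }
    let F := LinearMap.mkContinuous f 1 hbound
    exact F.hasSum hHsum
  have hgeo : HasSum (fun k : ℕ => r ^ k) (1 - r)⁻¹ :=
    hasSum_geometric_of_lt_one hr0 hr1
  have hdenom : 1 - r = μ * (2 - μ) := by ring
  constructor
  · intro ℓ
    have h1 : ∑ m, H ℓ m ≤ (1 - r)⁻¹ :=
      hasSum_le (fun k => (hpow k).2 ℓ) (key ℓ) hgeo
    rwa [hdenom, ← one_div] at h1
  · have h2 : ∑' k : ℕ, (1 - μ) ^ (2 * k) = ∑' k : ℕ, r ^ k := by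
      refine tsum_congr fun k => ?_
      rw [hr_def, ← pow_mul]
    rw [h2, hgeo.tsum_eq, hdenom, one_div]
end
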